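/- Let G be a torsion-free group, H an infinite cyclic normal subgroup of a subgroup N of G (for example N the normalizer of H). Then every finite subgroup of the quotient N/H is cyclic. -/

import Mathlib

theorem finite_subgroup_of_quotient_by_infinite_cyclic_is_cyclic
    {G : Type*} [Group G] (htf : ∀ g : G, g ≠ 1 → ¬IsOfFinOrder g)
    (N : Subgroup G) (H : Subgroup N) (hH : H.Normal)
    (hcyc : IsCyclic H) (hinf : Infinite H)
    (F : Subgroup (N ⧸ H)) (hF : Finite F) :
    IsCyclic F := by
  haveI := hH
  -- the preimage of F in N
  set P : Subgroup N := F.comap (QuotientGroup.mk' H) with hPdef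
  have hHP : H ≤ P := by
    intro h hh
    show QuotientGroup.mk' H h ∈ F
    rw [QuotientGroup.mk'_apply, (QuotientGroup.eq_one_iff h).mpr hh]
    exact F.one_mem
  -- the projection from P onto F
  set φ : ↥P →* ↥F :=
    ((QuotientGroup.mk' H).comp P.subtype).codRestrict F (fun x => x.2) with hφdef
  have hφsurj : Function.Surjective φ := by
    rintro ⟨f, hf⟩
    obtain ⟨n, rfl⟩ := QuotientGroup.mk'_surjective H f
    exact ⟨⟨n, hf⟩, rfl⟩
  set HK : Subgroup ↥P := H.subgroupOf P with hHKdef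
  have hker : φ.ker = HK := by
    ext x
    simp only [hφdef, MonoidHom.mem_ker, Subtype.ext_iff, MonoidHom.codRestrict_apply,
      MonoidHom.comp_apply, Subgroup.coe_subtype, QuotientGroup.mk'_apply, OneMemClass.coe_one,
      QuotientGroup.eq_one_iff]
    exact (QuotientGroup.eq_one_iff (x : N)).trans (Subgroup.mem_subgroupOf (H := H) (K := P)).symm
  -- P is torsion free
  have htfP : ∀ x : ↥P, x ≠ 1 → ¬IsOfFinOrder x := by
    intro x hx hfin
    have hinj : Function.Injective (N.subtype.comp P.subtype) :=
      Subtype.coe_injective.comp Subtype.coe_injective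
    have hx' : ((x : ↥N) : G) ≠ 1 := fun h => hx (Subtype.ext (Subtype.ext h))
    exact htf _ hx' (hinj.isOfFinOrder_iff.mpr hfin)
  set m : ℕ := Nat.card ↥F with hmdef
  have hm : m ≠ 0 := Nat.card_pos.ne'
  have hpow : ∀ x : ↥P, x ^ m ∈ HK := by
    intro x
    rw [← hker, MonoidHom.mem_ker, map_pow]
    exact pow_card_eq_one'
  -- HK is infinite cyclic
  have e : HK ≃* H := Subgroup.subgroupOfEquivOfLe hHP
  haveI : IsCyclic HK := isCyclic_of_surjective e.symm e.symm.surjective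
  haveI : Infinite HK := e.symm.toEquiv.infinite_iff.mp hinf
  haveI hHKnormal : HK.Normal := hH.subgroupOf P
  obtain ⟨g, hg⟩ := IsCyclic.exists_generator (α := HK)
  set g' : ↥P := (g : ↥P) with hg'def
  have hgmem : ∀ x : ↥P, x ∈ HK → ∃ k : ℤ, g' ^ k = x := by
    intro x hx
    obtain ⟨k, hk⟩ := Subgroup.mem_zpowers_iff.mp (hg ⟨x, hx⟩)
    exact ⟨k, by rw [← Subtype.coe_inj] at hk; push_cast at hk; exact_mod_cast hk⟩
  have hg1 : g' ≠ 1 := by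
    intro h
    have hgone : g = 1 := Subtype.ext h
    obtain ⟨x, hx⟩ := exists_ne (1 : HK)
    obtain ⟨k, hk⟩ := Subgroup.mem_zpowers_iff.mp (hg x)
    rw [hgone, one_zpow] at hk
    exact hx hk.symm
  have hgord : ¬IsOfFinOrder g' := htfP g' hg1
  have hzinj : Function.Injective fun n : ℤ => g' ^ n :=
    injective_zpow_iff_not_isOfFinOrder.mpr hgord
  -- g' is central in P
  have hcentral : ∀ x : ↥P, x * g' = g' * x := by
    intro x
    have hgHK : g' ∈ HK := g.2
    obtain ⟨a, ha⟩ := hgmem _ (hHKnormal.conj_mem _ hgHK x)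
    obtain ⟨b, hb⟩ := hgmem _ (hHKnormal.conj_mem _ hgHK x⁻¹)
    have key : g' ^ (b * a) = g' ^ (1 : ℤ) := by
      rw [zpow_one, mul_comm b a, zpow_mul, ha]
      rw [inv_inv] at hb
      calc (x * g' * x⁻¹) ^ b = x * g' ^ b * x⁻¹ := by
            rw [conj_zpow]
        _ = x * (x⁻¹ * g' * x) * x⁻¹ := by rw [hb]
        _ = g' := by group
    have hba : b * a = 1 := hzinj key
    rcases Int.isUnit_iff.mp (IsUnit.of_mul_eq_one (a := a) b (by linarith [mul_comm a b])) with h1 | h2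
    · rw [h1, zpow_one] at ha
      calc x * g' = (x * g' * x⁻¹) * x := by group
        _ = g' * x := by rw [← ha]
    · -- a = -1 : x conjugates g' to its inverse; derive a contradiction
      exfalso
      rw [h2, zpow_neg, zpow_one] at ha
      obtain ⟨k, hk⟩ := hgmem _ (hpow x)
      have hconj : x * g' ^ k * x⁻¹ = g' ^ (-k) := by
        rw [← conj_zpow, ← ha, inv_zpow, zpow_neg]
      rw [hk] at hconj
      have : x * x ^ m * x⁻¹ = x ^ m := by group
      rw [this, ← hk] at hconj
      have hk0 : k = -k := hzinj hconj
      have : k = 0 := by omega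
      rw [this, zpow_zero] at hk
      have hx1 : x = 1 := by
        by_contra hx1
        exact htfP x hx1 (isOfFinOrder_iff_pow_eq_one.mpr ⟨m, Nat.pos_of_ne_zero hm, hk.symm⟩)
      rw [hx1, one_mul, inv_one, mul_one] at ha
      have : g' ^ (2 : ℤ) = g' ^ (0 : ℤ) := by
        rw [zpow_zero, show (2:ℤ) = 1 + 1 by ring, zpow_add, zpow_one]
        nth_rewrite 1 [← ha]
        simp
      exact absurd (hzinj this) (by norm_num)
  -- center of P has finite index
  have hle : HK ≤ Subgroup.center ↥P := by
    intro x hx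
    obtain ⟨k, hk⟩ := hgmem x hx
    rw [Subgroup.mem_center_iff]
    intro y
    rw [← hk]
    exact Commute.zpow_right (hcentral y) k
  haveI : Finite (↥P ⧸ HK) := by
    rw [← hker]
    exact Finite.of_equiv _ (QuotientGroup.quotientKerEquivRange φ).toEquiv.symm
  haveI : HK.FiniteIndex := Subgroup.finiteIndex_of_finite_quotient (H := HK)
  haveI : (Subgroup.center ↥P).FiniteIndex := Subgroup.finiteIndex_of_le hle
  -- transfer: P embeds into its center, hence is commutative
  have hcind : (Subgroup.center ↥P).index ≠ 0 := Subgroup.FiniteIndex.index_ne_zero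
  have htinj : Function.Injective (MonoidHom.transferCenterPow ↥P) := by
    rw [injective_iff_map_eq_one]
    intro x hx
    have hx' : x ^ (Subgroup.center ↥P).index = 1 := by
      have := congrArg Subtype.val hx
      rwa [MonoidHom.transferCenterPow_apply] at this
    by_contra hne
    exact htfP x hne (isOfFinOrder_iff_pow_eq_one.mpr ⟨_, Nat.pos_of_ne_zero hcind, hx'⟩)
  have hcomm : ∀ a b : ↥P, a * b = b * a := by
    intro a b
    apply htinj
    rw [map_mul, map_mul]
    exact Subtype.ext (Subgroup.mem_center_iff.mp ((MonoidHom.transferCenterPow ↥P) b).2 _)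
  -- the m-th power map is an injective homomorphism from P into HK
  set ψ : ↥P →* ↥HK := MonoidHom.mk' (fun x => ⟨x ^ m, hpow x⟩)
    (fun a b => Subtype.ext (Commute.mul_pow (hcomm a b) m)) with hψdef
  have hψinj : Function.Injective ψ := by
    rw [injective_iff_map_eq_one]
    intro x hx
    have hx' : x ^ m = 1 := by
      have := congrArg Subtype.val hx
      simpa [hψdef] using this
    by_contra hne
    exact htfP x hne (isOfFinOrder_iff_pow_eq_one.mpr ⟨m, Nat.pos_of_ne_zero hm, hx'⟩)
  -- hence P is cyclic, and so is its quotient F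
  haveI : IsCyclic ↥P :=
    isCyclic_of_surjective (MonoidHom.ofInjective hψinj).symm
      (MonoidHom.ofInjective hψinj).symm.surjective
  exact isCyclic_of_surjective φ hφsurj
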